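/- For every integer n, lim_{y→0⁺} yⁿ (y² G'(y) + 1) = 0, where G(y) = 1 + 2∑_{k=1}^∞ e^{-π k² y²}. -/

import Mathlib

open Real Filter Set

noncomputable def Rf (y : ℝ) : ℝ := 2 * ∑' k : ℕ, Real.exp (-π * (k + 1) ^ 2 * y ^ 2)

noncomputable def Gf (y : ℝ) : ℝ := 1 + Rf y

lemma summable_sq_exp {c : ℝ} (hc : 0 < c) :
    Summable (fun k : ℕ => ((k:ℝ)+1)^2 * Real.exp (-(c * ((k:ℝ)+1)^2))) := by
  have hr : ‖Real.exp (-c)‖ < 1 := by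
    rw [Real.norm_eq_abs, abs_of_pos (Real.exp_pos _)]
    exact Real.exp_lt_one_iff.mpr (by linarith)
  have h := (summable_nat_add_iff (f := fun n : ℕ => (n:ℝ) ^ 2 * Real.exp (-c) ^ n) 1).mpr
    (summable_pow_mul_geometric_of_norm_lt_one 2 hr)
  apply h.of_nonneg_of_le (fun k => by positivity)
  intro k
  push_cast
  have h1 : Real.exp (-(c * ((k:ℝ)+1)^2)) ≤ Real.exp (-c) ^ (k+1) := by
    rw [← Real.exp_nat_mul]
    apply Real.exp_le_exp.2
    push_cast
    have h0 : (0:ℝ) ≤ (k:ℝ) := Nat.cast_nonneg k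
    nlinarith [mul_nonneg hc.le (mul_nonneg (by linarith : (0:ℝ) ≤ (k:ℝ)+1) h0)]
  have h2 : (0:ℝ) ≤ ((k:ℝ)+1)^2 := by positivity
  nlinarith [Real.exp_pos (-(c * ((k:ℝ)+1)^2))]

lemma summable_exp_sq {c : ℝ} (hc : 0 < c) :
    Summable (fun k : ℕ => Real.exp (-(c * ((k:ℝ)+1)^2))) := by
  apply (summable_sq_exp hc).of_nonneg_of_le (fun k => (Real.exp_pos _).le)
  intro k
  have h0 : (1:ℝ) ≤ ((k:ℝ)+1)^2 := by nlinarith [Nat.cast_nonneg (α := ℝ) k]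
  nlinarith [Real.exp_pos (-(c * ((k:ℝ)+1)^2))]

lemma hasDerivAt_term (k : ℕ) (y : ℝ) :
    HasDerivAt (fun y : ℝ => Real.exp (-π * ((k:ℝ) + 1) ^ 2 * y ^ 2))
      (Real.exp (-π * ((k:ℝ) + 1) ^ 2 * y ^ 2) * (-π * ((k:ℝ) + 1) ^ 2 * (2 * y))) y := by
  have h1 := ((hasDerivAt_pow 2 y).const_mul (-π * ((k:ℝ) + 1) ^ 2)).exp
  convert h1 using 1
  push_cast
  ring

lemma summable_at {x : ℝ} (hx : x ≠ 0) :
    Summable (fun k : ℕ => Real.exp (-π * ((k:ℝ) + 1) ^ 2 * x ^ 2)) := by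
  apply (summable_exp_sq (c := π * x ^ 2) (by positivity)).congr
  intro k; congr 1; ring

lemma hasDerivAt_Gf {x : ℝ} (hx : 0 < x) :
    HasDerivAt Gf
      (-4 * π * x * ∑' k : ℕ, (((k:ℝ)+1)^2 * Real.exp (-π * ((k:ℝ)+1) ^ 2 * x ^ 2))) x := by
  have c0 : (0:ℝ) < π * (x/2)^2 := by positivity
  have key : HasDerivAt (fun y : ℝ => ∑' k : ℕ, Real.exp (-π * ((k:ℝ) + 1) ^ 2 * y ^ 2))
      (∑' k : ℕ, (Real.exp (-π * ((k:ℝ) + 1) ^ 2 * x ^ 2) * (-π * ((k:ℝ) + 1) ^ 2 * (2 * x)))) x := by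
    apply hasDerivAt_tsum_of_isPreconnected
      (u := fun k : ℕ => (2*π*(x+1)) * (((k:ℝ)+1)^2 * Real.exp (-(π*(x/2)^2 * ((k:ℝ)+1)^2))))
      ((summable_sq_exp c0).mul_left _) isOpen_Ioo (isPreconnected_Ioo (a := x/2) (b := x+1))
      (fun k y _ => hasDerivAt_term k y) ?_ ?_ (summable_at hx.ne') ?_
    · intro k y hy
      obtain ⟨hy1, hy2⟩ := hy
      have hy0 : 0 < y := lt_trans (by linarith) hy1
      have ha : (0:ℝ) ≤ ((k:ℝ)+1)^2 := by positivity
      rw [Real.norm_eq_abs, abs_mul, abs_of_pos (Real.exp_pos _)]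
      have e1 : Real.exp (-π * ((k:ℝ) + 1) ^ 2 * y ^ 2)
          ≤ Real.exp (-(π*(x/2)^2 * ((k:ℝ)+1)^2)) := by
        apply Real.exp_le_exp.2
        have hsq : (0:ℝ) ≤ y^2 - (x/2)^2 := by nlinarith
        nlinarith [mul_nonneg (mul_nonneg Real.pi_pos.le ha) hsq]
      have e2 : |(-π * ((k:ℝ) + 1) ^ 2 * (2 * y))| = π * ((k:ℝ)+1)^2 * (2*y) := by
        have hp : (0:ℝ) ≤ π * ((k:ℝ)+1)^2 * (2*y) := by positivity
        rw [abs_of_nonpos (by linarith)]; ring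
      rw [e2]
      have e3 : π * ((k:ℝ)+1)^2 * (2*y) ≤ π * ((k:ℝ)+1)^2 * (2*(x+1)) := by
        gcongr <;> linarith
      calc Real.exp (-π * ((k:ℝ) + 1) ^ 2 * y ^ 2) * (π * ((k:ℝ)+1)^2 * (2*y))
          ≤ Real.exp (-(π*(x/2)^2 * ((k:ℝ)+1)^2)) * (π * ((k:ℝ)+1)^2 * (2*(x+1))) := by
            apply mul_le_mul e1 e3 (by positivity) (Real.exp_pos _).le
        _ = (2*π*(x+1)) * (((k:ℝ)+1)^2 * Real.exp (-(π*(x/2)^2 * ((k:ℝ)+1)^2))) := by ring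
    · exact ⟨by linarith, by linarith⟩
    · exact ⟨by linarith, by linarith⟩
  have key2 : HasDerivAt Gf
      (2 * ∑' k : ℕ, (Real.exp (-π * ((k:ℝ) + 1) ^ 2 * x ^ 2) * (-π * ((k:ℝ) + 1) ^ 2 * (2 * x)))) x := by
    exact (key.const_mul 2).const_add 1
  convert key2 using 1
  rw [← tsum_mul_left, ← tsum_mul_left]
  congr 1; funext k; ring

lemma Gf_eq_complex {y : ℝ} (hy : y ≠ 0) :
    (Gf y : ℂ) = jacobiTheta ((y:ℂ) ^ 2 * Complex.I) := by
  have him : 0 < ((y:ℂ) ^ 2 * Complex.I).im := by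
    simp only [Complex.mul_im, Complex.I_re, Complex.I_im, mul_zero, mul_one, zero_add,
      ← Complex.ofReal_pow, Complex.ofReal_re, Complex.ofReal_im, zero_mul, add_zero]
    positivity
  rw [jacobiTheta_eq_tsum_nat him]
  have hterm : ∀ n : ℕ, Complex.exp (↑π * Complex.I * ((n:ℂ) + 1) ^ 2 * ((y:ℂ) ^ 2 * Complex.I))
      = ((Real.exp (-π * ((n:ℝ) + 1) ^ 2 * y ^ 2) : ℝ) : ℂ) := by
    intro n
    have harg : ↑π * Complex.I * ((n:ℂ) + 1) ^ 2 * ((y:ℂ) ^ 2 * Complex.I)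
        = ((-π * ((n:ℝ) + 1) ^ 2 * y ^ 2 : ℝ) : ℂ) := by
      push_cast
      rw [show (↑π * Complex.I * ((n:ℂ) + 1) ^ 2 * ((y:ℂ) ^ 2 * Complex.I))
        = (Complex.I * Complex.I) * (↑π * ((n:ℂ) + 1) ^ 2 * (y:ℂ)^2) from by ring,
        Complex.I_mul_I]
      ring
    rw [harg, Complex.ofReal_exp]
  simp_rw [hterm]
  rw [Gf, Rf]
  push_cast [Complex.ofReal_tsum]
  ring

lemma Gf_feq {y : ℝ} (hy : 0 < y) : Gf (1/y) = y * Gf y := by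
  have him : 0 < ((y:ℂ) ^ 2 * Complex.I).im := by
    simp only [Complex.mul_im, Complex.I_re, Complex.I_im, mul_zero, mul_one, zero_add,
      ← Complex.ofReal_pow, Complex.ofReal_re, Complex.ofReal_im, zero_mul, add_zero]
    positivity
  set τ : UpperHalfPlane := ⟨(y:ℂ) ^ 2 * Complex.I, him⟩ with hτ
  have hS := jacobiTheta_S_smul τ
  have hyC : (y:ℂ) ≠ 0 := Complex.ofReal_ne_zero.mpr hy.ne'
  have hcoe : (↑(ModularGroup.S • τ) : ℂ) = ((1/y : ℝ) : ℂ) ^ 2 * Complex.I := by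
    rw [UpperHalfPlane.modular_S_smul, UpperHalfPlane.coe_mk]
    show (-((y:ℂ) ^ 2 * Complex.I))⁻¹ = _
    rw [inv_neg, mul_inv, Complex.inv_I]
    push_cast
    field_simp
  have hpow : (-Complex.I * τ) ^ (1/2 : ℂ) = (y : ℂ) := by
    have h1 : (-Complex.I * τ : ℂ) = ((y^2 : ℝ) : ℂ) := by
      show -Complex.I * ((y:ℂ) ^ 2 * Complex.I) = _
      rw [show -Complex.I * ((y:ℂ) ^ 2 * Complex.I) =
        -(Complex.I * Complex.I) * (y:ℂ)^2 from by ring, Complex.I_mul_I]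
      push_cast; ring
    rw [h1, show (1/2 : ℂ) = (((1:ℝ)/2 : ℝ) : ℂ) from by push_cast; ring,
      ← Complex.ofReal_cpow (by positivity), ← Real.rpow_natCast y 2]
    rw [← Real.rpow_mul hy.le]
    norm_num
  have hτc : (τ : ℂ) = (y:ℂ) ^ 2 * Complex.I := rfl
  rw [hτc] at hS hpow
  rw [hcoe, hpow, ← Gf_eq_complex (by positivity : (1/y : ℝ) ≠ 0),
    ← Gf_eq_complex hy.ne'] at hS
  exact_mod_cast hS

noncomputable def Sf (u : ℝ) : ℝ :=
    ∑' k : ℕ, (((k:ℝ)+1)^2 * Real.exp (-π * ((k:ℝ)+1) ^ 2 * u ^ 2))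
noncomputable def C1 : ℝ := ∑' k : ℕ, (((k:ℝ)+1)^2 * Real.exp (-(π/2 * ((k:ℝ)+1)^2)))
noncomputable def C0 : ℝ := ∑' k : ℕ, Real.exp (-(π/2 * ((k:ℝ)+1)^2))

lemma summable_Sf {u : ℝ} (hu : u ≠ 0) :
    Summable (fun k : ℕ => (((k:ℝ)+1)^2 * Real.exp (-π * ((k:ℝ)+1) ^ 2 * u ^ 2))) := by
  apply (summable_sq_exp (c := π * u ^ 2) (by positivity)).congr
  intro k; congr 2; ring

lemma key_deriv {y : ℝ} (hy : 0 < y) :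
    y ^ 2 * deriv Gf y + 1 = 4 * π * (y⁻¹) ^ 2 * Sf y⁻¹ - Rf y⁻¹ := by
  have hu : 0 < y⁻¹ := by positivity
  have hinv : HasDerivAt (fun z : ℝ => z⁻¹) (-(y^2)⁻¹) y := hasDerivAt_inv hy.ne'
  have hcomp := (hasDerivAt_Gf hu).comp y hinv
  have hmul := hinv.mul hcomp
  have heq : (fun z : ℝ => z⁻¹ * (Gf ∘ fun z : ℝ => z⁻¹) z) =ᶠ[nhds y] Gf := by
    filter_upwards [isOpen_Ioi.mem_nhds (mem_Ioi.mpr hy)] with z hz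
    have := Gf_feq (mem_Ioi.mp hz)
    rw [one_div] at this
    have hz0 : z ≠ 0 := (mem_Ioi.mp hz).ne'
    simp only [Function.comp, this]
    field_simp
  have hGf := hmul.congr_of_eventuallyEq heq.symm
  rw [hGf.deriv]
  have hGfu : (Gf ∘ Inv.inv) y = 1 + Rf y⁻¹ := rfl
  have hS : (∑' k : ℕ, (((k:ℝ)+1)^2 * Real.exp (-π * ((k:ℝ)+1) ^ 2 * (y⁻¹) ^ 2))) = Sf y⁻¹ := rfl
  rw [hGfu, hS]
  field_simp
  ring

lemma Sf_bound {u : ℝ} (hu : 1 ≤ u) : Sf u ≤ C1 * Real.exp (-(π/2) * u^2) := by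
  have hu0 : u ≠ 0 := by linarith
  rw [Sf, C1, ← tsum_mul_right]
  apply Summable.tsum_le_tsum _ (summable_Sf hu0) (((summable_sq_exp (by positivity)).mul_right _))
  intro k
  have hk : (1:ℝ) ≤ ((k:ℝ)+1)^2 := by nlinarith [Nat.cast_nonneg (α := ℝ) k]
  have he : Real.exp (-π * ((k:ℝ)+1) ^ 2 * u ^ 2)
      ≤ Real.exp (-(π/2 * ((k:ℝ)+1)^2)) * Real.exp (-(π/2) * u^2) := by
    rw [← Real.exp_add]
    apply Real.exp_le_exp.2
    have ha1 : (0:ℝ) ≤ ((k:ℝ)+1)^2 - 1 := by nlinarith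
    have hu1 : (0:ℝ) ≤ u^2 - 1 := by nlinarith
    nlinarith [Real.pi_pos, mul_nonneg (mul_nonneg Real.pi_pos.le ha1) hu1,
      mul_nonneg Real.pi_pos.le ha1, mul_nonneg Real.pi_pos.le hu1]
  calc ((k:ℝ)+1)^2 * Real.exp (-π * ((k:ℝ)+1) ^ 2 * u ^ 2)
      ≤ ((k:ℝ)+1)^2 * (Real.exp (-(π/2 * ((k:ℝ)+1)^2)) * Real.exp (-(π/2) * u^2)) := by
        apply mul_le_mul_of_nonneg_left he (by positivity)
    _ = ((k:ℝ)+1)^2 * Real.exp (-(π/2 * ((k:ℝ)+1)^2)) * Real.exp (-(π/2) * u^2) := by ring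

lemma Rf_bound {u : ℝ} (hu : 1 ≤ u) : Rf u ≤ 2 * C0 * Real.exp (-(π/2) * u^2) := by
  have hu0 : u ≠ 0 := by linarith
  rw [Rf, C0, mul_assoc, ← tsum_mul_right]
  have h2 : (0:ℝ) ≤ 2 := by norm_num
  apply mul_le_mul_of_nonneg_left _ h2
  apply Summable.tsum_le_tsum _ (summable_at hu0) ((summable_exp_sq (by positivity)).mul_right _)
  intro k
  have hk : (1:ℝ) ≤ ((k:ℝ)+1)^2 := by nlinarith [Nat.cast_nonneg (α := ℝ) k]
  rw [← Real.exp_add]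
  apply Real.exp_le_exp.2
  have ha1 : (0:ℝ) ≤ ((k:ℝ)+1)^2 - 1 := by nlinarith
  have hu1 : (0:ℝ) ≤ u^2 - 1 := by nlinarith
  nlinarith [Real.pi_pos, mul_nonneg (mul_nonneg Real.pi_pos.le ha1) hu1,
    mul_nonneg Real.pi_pos.le ha1, mul_nonneg Real.pi_pos.le hu1]

lemma Sf_nonneg (u : ℝ) : 0 ≤ Sf u := tsum_nonneg (fun k => by positivity)
lemma Rf_nonneg (u : ℝ) : 0 ≤ Rf u :=
  mul_nonneg (by norm_num) (tsum_nonneg (fun k => (Real.exp_pos _).le))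
lemma C1_nonneg : 0 ≤ C1 := tsum_nonneg (fun k => by positivity)
lemma C0_nonneg : 0 ≤ C0 := tsum_nonneg (fun k => (Real.exp_pos _).le)

theorem limit_y2G'_plus_one (n : ℤ) :
    Tendsto (fun y : ℝ => y ^ n * (y ^ 2 * deriv Gf y + 1)) (nhdsWithin 0 (Ioi 0)) (nhds 0) := by
  set a := n.natAbs with ha
  set m := n.natAbs + 2 with hm
  set K := 4 * π * C1 + 2 * C0 with hKdef
  apply squeeze_zero_norm'
    (a := fun y : ℝ => K * (((y^2)⁻¹)^m * Real.exp (-(π/2) * (y^2)⁻¹)))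
  · filter_upwards [Ioo_mem_nhdsGT_of_mem (show (0:ℝ) ∈ Ico 0 1 by norm_num)] with y hy
    obtain ⟨hy0, hy1⟩ := hy
    set u := y⁻¹ with hudef
    have hu0 : 0 < u := by positivity
    have hu : 1 ≤ u := by
      rw [hudef, le_inv_comm₀ one_pos hy0]
      simpa using hy1.le
    have hu2 : (y^2)⁻¹ = u^2 := by rw [hudef, inv_pow]
    rw [key_deriv hy0, hu2]
    set A := Real.exp (-(π/2) * u^2) with hAdef
    have hA : 0 < A := Real.exp_pos _
    have hS := Sf_bound hu
    have hR := Rf_bound hu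
    have hSn : (0:ℝ) ≤ 4*π*u^2*Sf u := mul_nonneg (by positivity) (Sf_nonneg u)
    have s1 : |4*π*u^2*Sf u - Rf u| ≤ (4*π*C1*u^2 + 2*C0) * A := by
      have t1 : 4*π*u^2*Sf u ≤ 4*π*u^2*(C1*A) :=
        mul_le_mul_of_nonneg_left hS (by positivity)
      have t2 : (0:ℝ) ≤ 2*C0*A := by
        have := C0_nonneg; positivity
      have t3 : (0:ℝ) ≤ 4*π*C1*u^2*A := by
        have := C1_nonneg; positivity
      rcases abs_cases (4*π*u^2*Sf u - Rf u) with ⟨h,_⟩ | ⟨h,_⟩ <;>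
        nlinarith [Rf_nonneg u]
    have s2 : y ^ n ≤ u ^ a := by
      have h1 : u ^ (-n) = y ^ n := by rw [zpow_neg, hudef, inv_zpow, inv_inv]
      have h2 : u ^ (-n) ≤ u ^ (a:ℤ) := zpow_le_zpow_right₀ hu (by simp only [ha]; omega)
      rw [← h1, ← zpow_natCast u a]
      exact h2
    have hyn : (0:ℝ) < y ^ n := zpow_pos hy0 n
    calc ‖y ^ n * (4*π*u^2*Sf u - Rf u)‖
        = y ^ n * |4*π*u^2*Sf u - Rf u| := by
          rw [Real.norm_eq_abs, abs_mul, abs_of_pos hyn]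
      _ ≤ u ^ a * ((4*π*C1*u^2 + 2*C0) * A) := by
          apply mul_le_mul s2 s1 (abs_nonneg _) (pow_nonneg hu0.le a)
      _ = (4*π*C1*u^(a+2) + 2*C0*u^a) * A := by rw [pow_add]; ring
      _ ≤ (4*π*C1*u^(2*m) + 2*C0*u^(2*m)) * A := by
          have q1 : u^(a+2) ≤ u^(2*m) := pow_le_pow_right₀ hu (by omega)
          have q2 : u^a ≤ u^(2*m) := pow_le_pow_right₀ hu (by omega)
          have c1 : (0:ℝ) ≤ 4*π*C1 := by have := C1_nonneg; positivity
          have c0 : (0:ℝ) ≤ 2*C0 := by have := C0_nonneg; positivity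
          apply mul_le_mul_of_nonneg_right _ hA.le
          nlinarith [mul_le_mul_of_nonneg_left q1 c1, mul_le_mul_of_nonneg_left q2 c0]
      _ = K * ((u^2)^m * A) := by rw [← pow_mul, hKdef]; ring
  · have hbase := tendsto_pow_mul_exp_neg_atTop_nhds_zero m
    have hlin : Tendsto (fun v : ℝ => (π/2) * v) atTop atTop :=
      Tendsto.const_mul_atTop (by positivity) tendsto_id
    have h7 := hbase.comp hlin
    have h8 : Tendsto (fun v : ℝ => K * (v^m * Real.exp (-(π/2) * v))) atTop (nhds 0) := by
      have h9 := h7.const_mul (K * (2/π)^m)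
      rw [mul_zero] at h9
      apply h9.congr
      intro v
      have hπ : (π:ℝ) ≠ 0 := Real.pi_ne_zero
      have hexp : Real.exp (-((π/2) * v)) = Real.exp (-(π/2) * v) := by ring_nf
      have hone : ((2:ℝ)/π)^m * (π/2)^m = 1 := by
        rw [← mul_pow]
        field_simp
        exact one_pow m
      simp only [Function.comp]
      rw [hexp, mul_pow]
      linear_combination K * v^m * Real.exp (-(π/2)*v) * hone
    have hv : Tendsto (fun y : ℝ => (y^2)⁻¹) (nhdsWithin 0 (Ioi 0)) atTop := by
      have h10 := (tendsto_pow_atTop (α := ℝ) (n := 2) two_ne_zero).comp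
        (tendsto_inv_nhdsGT_zero (𝕜 := ℝ))
      apply h10.congr
      intro y
      simp only [Function.comp_apply, inv_pow]
    exact h8.comp hv
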